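/- Fix an integer n ≥ 2, w̄ > 0 and φ ≠ 0, and suppose Assumption 1 holds: w̄ < 1/(φ(n−1)) if φ > 0; w̄ < −2/(φn) if φ < 0 and n is even; w̄ < −2/(φ√(n²−1)) if φ < 0 and n is odd. Then for every g ∈ 𝒢ₙ, every real eigenvalue of φg is strictly less than 1. -/

import Mathlib

open Matrix

/-- `μ` is a (real) eigenvalue of the matrix `M`. -/
def hasEigen {n : ℕ} (M : Matrix (Fin n) (Fin n) ℝ) (μ : ℝ) : Prop :=
  ∃ v : Fin n → ℝ, v ≠ 0 ∧ M.mulVec v = μ • v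

/-- The set `𝒢ₙ` of symmetric `n×n` networks with zero diagonal and weights in `[0, w̄]`. -/
def Gset (n : ℕ) (w : ℝ) : Set (Matrix (Fin n) (Fin n) ℝ) :=
  {g | g.IsSymm ∧ (∀ i, g i i = 0) ∧ ∀ i j, 0 ≤ g i j ∧ g i j ≤ w}

set_option maxHeartbeats 1000000

private lemma my_le_of_sq_le_sq {a b : ℝ} (hb : 0 ≤ b) (h : a ^ 2 ≤ b ^ 2) :
    a ≤ b := by nlinarith

private lemma my_prod_sq_bound {A B Sp Sq T k m : ℝ} (h1 : A ^ 2 ≤ k * Sp)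
    (h2 : B ^ 2 ≤ m * Sq) (hSp : 0 ≤ Sp) (hSq : 0 ≤ Sq) (hk : 0 ≤ k) (hm : 0 ≤ m)
    (hT : Sp + Sq = T) : (2 * (A * B)) ^ 2 ≤ k * m * T ^ 2 := by
  have h3 : A ^ 2 * B ^ 2 ≤ (k * Sp) * (m * Sq) :=
    mul_le_mul h1 h2 (sq_nonneg B) (by positivity)
  have h4 : 4 * (Sp * Sq) ≤ T ^ 2 := by nlinarith [sq_nonneg (Sp - Sq)]
  have h5 : k * m * (4 * (Sp * Sq)) ≤ k * m * T ^ 2 :=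
    mul_le_mul_of_nonneg_left h4 (mul_nonneg hk hm)
  calc (2 * (A * B)) ^ 2 = 4 * (A ^ 2 * B ^ 2) := by ring
    _ ≤ 4 * ((k * Sp) * (m * Sq)) := by linarith
    _ = k * m * (4 * (Sp * Sq)) := by ring
    _ ≤ k * m * T ^ 2 := h5

private lemma my_km_even {k m c : ℝ} (hk : 0 ≤ k) (hm : 0 ≤ m) (h : k + m ≤ c) :
    k * m ≤ (c / 2) ^ 2 := by nlinarith [sq_nonneg (k - m)]

private lemma my_km_odd {k m n : ℕ} (hkm : k + m ≤ n) (hodd : Odd n) :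
    (k : ℝ) * m ≤ ((n : ℝ) ^ 2 - 1) / 4 := by
  have hkm' : (k : ℝ) + m ≤ (n : ℝ) := by exact_mod_cast hkm
  have hk0 : (0:ℝ) ≤ (k:ℝ) := Nat.cast_nonneg k
  have hm0 : (0:ℝ) ≤ (m:ℝ) := Nat.cast_nonneg m
  have h2 : ((k : ℝ) + m) ^ 2 ≤ (n : ℝ) ^ 2 := by nlinarith
  rcases eq_or_ne k m with heq | hne
  · have h2k : 2 * k + 1 ≤ n := by
      rcases Nat.lt_or_ge (2 * k) n with h | h
      · omega
      · exfalso
        have he : 2 * k = n := by omega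
        exact (Nat.not_odd_iff_even.mpr ⟨k, by omega⟩) hodd
    have h2k' : 2 * (k : ℝ) + 1 ≤ (n : ℝ) := by exact_mod_cast h2k
    subst heq
    nlinarith
  · have h1 : 1 ≤ ((k : ℝ) - m) ^ 2 := by
      rcases lt_or_gt_of_ne hne with h | h
      · have h' : (k : ℝ) + 1 ≤ m := by exact_mod_cast h
        nlinarith
      · have h' : (m : ℝ) + 1 ≤ k := by exact_mod_cast h
        nlinarith
    linarith [h1, h2]

/-- Remark 1: under Assumption 1, every real eigenvalue of `φg` is strictly less than `1`
for every `g ∈ 𝒢ₙ`. -/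
theorem stmt12 (n : ℕ) (hn : 2 ≤ n) (w φ : ℝ) (hw : 0 < w) (hφ : φ ≠ 0)
    (hpos : 0 < φ → w < 1 / (φ * ((n : ℝ) - 1)))
    (hnegEven : φ < 0 → Even n → w < -2 / (φ * (n : ℝ)))
    (hnegOdd : φ < 0 → Odd n → w < -2 / (φ * Real.sqrt ((n : ℝ) ^ 2 - 1))) :
    ∀ g ∈ Gset n w, ∀ μ : ℝ, hasEigen (φ • g) μ → μ < 1 := by
  classical
  rintro g ⟨hsym, hdiag, hbound⟩ μ ⟨v, hv0, hev⟩
  have hn' : (2:ℝ) ≤ (n:ℝ) := by exact_mod_cast hn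
  set lam := μ / φ with hlam
  have hμ : μ = φ * lam := by rw [hlam, mul_div_assoc', mul_div_cancel_left₀ μ hφ]
  have hgv : ∀ i, (∑ j, g i j * v j) = lam * v i := by
    intro i
    have h1 := congrFun hev i
    simp [Matrix.mulVec, dotProduct, Finset.mul_sum, mul_assoc] at h1
    rw [← Finset.mul_sum] at h1
    rw [hlam]; field_simp
    linarith [h1]
  set T := ∑ i, v i ^ 2 with hTdef
  have hT : 0 < T := by
    obtain ⟨i, hi⟩ := Function.ne_iff.mp hv0
    refine Finset.sum_pos' (fun i _ => sq_nonneg _) ⟨i, Finset.mem_univ i, ?_⟩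
    have h := abs_pos.mpr hi
    nlinarith [sq_abs (v i)]
  have hQ : ∑ i, ∑ j, g i j * v j * v i = lam * T := by
    rw [hTdef, Finset.mul_sum]
    refine Finset.sum_congr rfl fun i _ => ?_
    rw [← Finset.sum_mul, hgv i]; ring
  rcases hφ.lt_or_gt with hφneg | hφpos
  · -- φ < 0
    set p := fun i => max (v i) 0 with hp
    set q := fun i => max (-(v i)) 0 with hq
    have hp0 : ∀ i, 0 ≤ p i := fun i => le_max_right _ _
    have hq0 : ∀ i, 0 ≤ q i := fun i => le_max_right _ _
    have hpq : ∀ i, p i * q i = 0 ∧ p i - q i = v i ∧ p i ^ 2 + q i ^ 2 = v i ^ 2 := by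
      intro i
      rcases le_total 0 (v i) with h | h
      · have h1 : p i = v i := max_eq_left h
        have h2 : q i = 0 := max_eq_right (by linarith)
        refine ⟨by rw [h2]; ring, by rw [h1, h2]; ring, by rw [h1, h2]; ring⟩
      · have h1 : p i = 0 := max_eq_right h
        have h2 : q i = -(v i) := max_eq_left (by linarith)
        refine ⟨by rw [h1]; ring, by rw [h1, h2]; ring, by rw [h1, h2]; ring⟩
    set A := ∑ i, p i with hA
    set B := ∑ i, q i with hB
    set Sp := ∑ i, p i ^ 2 with hSp
    set Sq := ∑ i, q i ^ 2 with hSq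
    have hA0 : 0 ≤ A := Finset.sum_nonneg fun i _ => hp0 i
    have hB0 : 0 ≤ B := Finset.sum_nonneg fun i _ => hq0 i
    have hSpSq : Sp + Sq = T := by
      rw [hSp, hSq, hTdef, ← Finset.sum_add_distrib]
      exact Finset.sum_congr rfl fun i _ => (hpq i).2.2
    have hSp0 : 0 ≤ Sp := Finset.sum_nonneg fun i _ => sq_nonneg _
    have hSq0 : 0 ≤ Sq := Finset.sum_nonneg fun i _ => sq_nonneg _
    have hterm : ∀ i j, -(w * (p i * q j + q i * p j)) ≤ g i j * v j * v i := by
      intro i j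
      obtain ⟨hij1, hij2, _⟩ := hpq i
      obtain ⟨hji1, hji2, _⟩ := hpq j
      have hg1 := (hbound i j).1
      have hg2 := (hbound i j).2
      rw [← hij2, ← hji2]
      nlinarith [mul_nonneg hg1 (mul_nonneg (hp0 i) (hp0 j)),
        mul_nonneg hg1 (mul_nonneg (hq0 i) (hq0 j)),
        mul_nonneg (sub_nonneg.mpr hg2) (mul_nonneg (hp0 i) (hq0 j)),
        mul_nonneg (sub_nonneg.mpr hg2) (mul_nonneg (hq0 i) (hp0 j))]
    have hQlow : -(2 * w * (A * B)) ≤ lam * T := by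
      rw [← hQ]
      have step2 : ∑ i, -(w * (p i * B + q i * A)) = -(2 * w * (A * B)) := by
        rw [Finset.sum_neg_distrib]
        simp only [mul_add, Finset.sum_add_distrib]
        rw [← Finset.mul_sum, ← Finset.mul_sum, ← Finset.sum_mul, ← Finset.sum_mul,
          ← hA, ← hB]
        ring
      rw [← step2]
      refine Finset.sum_le_sum fun i _ => ?_
      have inner : -(w * (p i * B + q i * A)) = ∑ j, -(w * (p i * q j + q i * p j)) := by
        simp only [hA, hB, Finset.mul_sum, mul_add, Finset.sum_add_distrib,
          Finset.sum_neg_distrib]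
      rw [inner]
      exact Finset.sum_le_sum fun j _ => hterm i j
    set P := Finset.univ.filter (fun i => p i ≠ 0) with hPdef
    set N := Finset.univ.filter (fun i => q i ≠ 0) with hNdef
    have hA2 : A ^ 2 ≤ (P.card : ℝ) * Sp := by
      have h1 : A = ∑ i ∈ P, p i := by
        rw [hA, hPdef]; exact (Finset.sum_filter_ne_zero _).symm
      calc A ^ 2 = (∑ i ∈ P, p i) ^ 2 := by rw [h1]
        _ ≤ (P.card : ℝ) * ∑ i ∈ P, p i ^ 2 := sq_sum_le_card_mul_sum_sq (s := P) (f := p)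
        _ ≤ (P.card : ℝ) * Sp := by
            apply mul_le_mul_of_nonneg_left _ (Nat.cast_nonneg _)
            exact Finset.sum_le_sum_of_subset_of_nonneg (Finset.filter_subset _ _)
              (fun i _ _ => sq_nonneg _)
    have hB2 : B ^ 2 ≤ (N.card : ℝ) * Sq := by
      have h1 : B = ∑ i ∈ N, q i := by
        rw [hB, hNdef]; exact (Finset.sum_filter_ne_zero _).symm
      calc B ^ 2 = (∑ i ∈ N, q i) ^ 2 := by rw [h1]
        _ ≤ (N.card : ℝ) * ∑ i ∈ N, q i ^ 2 := sq_sum_le_card_mul_sum_sq (s := N) (f := q)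
        _ ≤ (N.card : ℝ) * Sq := by
            apply mul_le_mul_of_nonneg_left _ (Nat.cast_nonneg _)
            exact Finset.sum_le_sum_of_subset_of_nonneg (Finset.filter_subset _ _)
              (fun i _ _ => sq_nonneg _)
    have hdisj : Disjoint P N := by
      rw [Finset.disjoint_left]
      intro i hiP hiN
      rw [hPdef, Finset.mem_filter] at hiP
      rw [hNdef, Finset.mem_filter] at hiN
      exact mul_ne_zero hiP.2 hiN.2 (hpq i).1
    have hkm : P.card + N.card ≤ n := by
      have h1 : (P ∪ N).card = P.card + N.card := Finset.card_union_of_disjoint hdisj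
      have h2 : (P ∪ N).card ≤ n := by
        have := Finset.card_le_univ (P ∪ N)
        simpa using this
      omega
    have h2AB : (2 * (A * B)) ^ 2 ≤ ((P.card : ℝ) * N.card) * T ^ 2 :=
      my_prod_sq_bound hA2 hB2 hSp0 hSq0 (Nat.cast_nonneg _) (Nat.cast_nonneg _) hSpSq
    rcases Nat.even_or_odd n with hevn | hodd
    · -- n even
      have hC : ((P.card : ℝ) * N.card) ≤ ((n:ℝ)/2) ^ 2 :=
        my_km_even (Nat.cast_nonneg _) (Nat.cast_nonneg _) (by exact_mod_cast hkm)
      have h2AB' : 2 * (A * B) ≤ ((n:ℝ)/2) * T := by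
        apply my_le_of_sq_le_sq (by positivity)
        calc (2 * (A * B)) ^ 2 ≤ ((P.card : ℝ) * N.card) * T ^ 2 := h2AB
          _ ≤ ((n:ℝ)/2) ^ 2 * T ^ 2 := mul_le_mul_of_nonneg_right hC (sq_nonneg T)
          _ = (((n:ℝ)/2) * T) ^ 2 := by ring
      have hlamge : -(w * ((n:ℝ)/2)) ≤ lam := by
        have h1 : w * (2 * (A * B)) ≤ w * (((n:ℝ)/2) * T) :=
          mul_le_mul_of_nonneg_left h2AB' hw.le
        have e1 : -(w * ((n:ℝ)/2)) * T = -(w * (((n:ℝ)/2) * T)) := by ring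
        have e2 : w * (2 * (A * B)) = 2 * w * (A * B) := by ring
        have h3 : -(w * ((n:ℝ)/2)) * T ≤ lam * T := by linarith
        exact le_of_mul_le_mul_right h3 hT
      have hk := hnegEven hφneg hevn
      have hφn : φ * (n:ℝ) < 0 := mul_neg_of_neg_of_pos hφneg (by linarith)
      rw [lt_div_iff_of_neg hφn] at hk
      have hμle : μ ≤ φ * (-(w * ((n:ℝ)/2))) := by
        rw [hμ]
        exact mul_le_mul_of_nonpos_left hlamge hφneg.le
      have e3 : φ * (-(w * ((n:ℝ)/2))) = -(w * (φ * (n:ℝ))) / 2 := by ring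
      linarith
    · -- n odd
      set s := Real.sqrt ((n:ℝ) ^ 2 - 1) with hs
      have hn2 : (0:ℝ) < (n:ℝ) ^ 2 - 1 := by
        have h4 : (2:ℝ) * 2 ≤ (n:ℝ) * (n:ℝ) := mul_le_mul hn' hn' (by norm_num) (by linarith)
        have h5 : (n:ℝ) ^ 2 = (n:ℝ) * (n:ℝ) := by ring
        linarith
      have hs2 : s ^ 2 = (n:ℝ) ^ 2 - 1 := Real.sq_sqrt (by linarith)
      have hs0 : 0 < s := Real.sqrt_pos.mpr hn2
      have hC : ((P.card : ℝ) * N.card) ≤ (s/2) ^ 2 := by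
        have h1 := my_km_odd hkm hodd
        have e1 : (s/2) ^ 2 = ((n:ℝ) ^ 2 - 1)/4 := by rw [div_pow, hs2]; norm_num
        rw [e1]; exact h1
      have h2AB' : 2 * (A * B) ≤ (s/2) * T := by
        apply my_le_of_sq_le_sq (by positivity)
        calc (2 * (A * B)) ^ 2 ≤ ((P.card : ℝ) * N.card) * T ^ 2 := h2AB
          _ ≤ (s/2) ^ 2 * T ^ 2 := mul_le_mul_of_nonneg_right hC (sq_nonneg T)
          _ = ((s/2) * T) ^ 2 := by ring
      have hlamge : -(w * (s/2)) ≤ lam := by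
        have h1 : w * (2 * (A * B)) ≤ w * ((s/2) * T) :=
          mul_le_mul_of_nonneg_left h2AB' hw.le
        have e1 : -(w * (s/2)) * T = -(w * ((s/2) * T)) := by ring
        have e2 : w * (2 * (A * B)) = 2 * w * (A * B) := by ring
        have h3 : -(w * (s/2)) * T ≤ lam * T := by linarith
        exact le_of_mul_le_mul_right h3 hT
      have hk := hnegOdd hφneg hodd
      have hφs : φ * s < 0 := mul_neg_of_neg_of_pos hφneg hs0
      rw [lt_div_iff_of_neg hφs] at hk
      have hμle : μ ≤ φ * (-(w * (s/2))) := by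
        rw [hμ]
        exact mul_le_mul_of_nonpos_left hlamge hφneg.le
      have e3 : φ * (-(w * (s/2))) = -(w * (φ * s)) / 2 := by ring
      linarith
  · -- φ > 0
    set S := ∑ i, |v i| with hS
    have hterm : ∀ i j, g i j * v j * v i ≤ w * (|v i| * |v j|) - (if i = j then w * (v i * v i) else 0) := by
      intro i j
      rcases eq_or_ne i j with rfl | hij
      · simp [hdiag i, abs_mul_abs_self]
      · simp only [if_neg hij, sub_zero]
        have hg1 := (hbound i j).1
        have hg2 := (hbound i j).2
        have h1 : g i j * v j * v i ≤ w * |v j * v i| := by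
          rcases le_total 0 (v j * v i) with h | h
          · rw [abs_of_nonneg h, show g i j * v j * v i = g i j * (v j * v i) by ring]
            exact mul_le_mul_of_nonneg_right hg2 h
          · calc g i j * v j * v i = g i j * (v j * v i) := by ring
              _ ≤ 0 := mul_nonpos_of_nonneg_of_nonpos hg1 h
              _ ≤ w * |v j * v i| := by positivity
        calc g i j * v j * v i ≤ w * |v j * v i| := h1
          _ = w * (|v i| * |v j|) := by rw [abs_mul]; ring
    have hQhigh : lam * T ≤ w * (S * S) - w * T := by
      rw [← hQ]
      have e1 : ∑ i, ∑ j, w * (|v i| * |v j|) = w * (S * S) := by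
        rw [hS, Finset.sum_mul_sum, Finset.mul_sum]
        refine Finset.sum_congr rfl fun i _ => ?_
        rw [Finset.mul_sum]
      have e2 : ∑ i, ∑ j, (if i = j then w * (v i * v i) else 0) = w * T := by
        rw [hTdef, Finset.mul_sum]
        refine Finset.sum_congr rfl fun i _ => ?_
        rw [Finset.sum_ite_eq Finset.univ i (fun j => w * (v i * v i))]
        simp [sq]
      calc ∑ i, ∑ j, g i j * v j * v i
          ≤ ∑ i, ∑ j, (w * (|v i| * |v j|) - (if i = j then w * (v i * v i) else 0)) :=
            Finset.sum_le_sum fun i _ => Finset.sum_le_sum fun j _ => hterm i j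
        _ = w * (S * S) - w * T := by
            simp only [Finset.sum_sub_distrib]
            rw [e1, e2]
    have hCS : S * S ≤ n * T := by
      have h := sq_sum_le_card_mul_sum_sq (s := (Finset.univ : Finset (Fin n)))
        (f := fun i => |v i|)
      have h2 : S ^ 2 ≤ (n:ℝ) * T := by
        rw [hS, hTdef]
        simpa [sq_abs] using h
      rw [pow_two] at h2
      exact h2
    have hlamle : lam ≤ w * ((n:ℝ) - 1) := by
      have h3 : w * (S * S) ≤ w * ((n:ℝ) * T) := mul_le_mul_of_nonneg_left hCS hw.le
      have h4 : w * ((n:ℝ) * T) - w * T = w * ((n:ℝ) - 1) * T := by ring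
      have h1 : lam * T ≤ w * ((n:ℝ) - 1) * T := by linarith
      exact le_of_mul_le_mul_right h1 hT
    have hkey := hpos hφpos
    have hφn : 0 < φ * ((n:ℝ) - 1) := mul_pos hφpos (by linarith)
    rw [lt_div_iff₀ hφn] at hkey
    have hμle : μ ≤ φ * (w * ((n:ℝ) - 1)) := by
      rw [hμ]
      exact mul_le_mul_of_nonneg_left hlamle hφpos.le
    have e3 : φ * (w * ((n:ℝ) - 1)) = w * (φ * ((n:ℝ) - 1)) := by ring
    linarith
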